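/- If R has distribution Pr[R=r] = C(k+r, k)·C(n−k+m−r, n−k)/C(n+m+1, n+1) for r = 0, 1, …, m (with k ≤ n natural numbers), then E[R] = m·(k+1)/(n+2). -/

import Mathlib

open Finset

lemma hockey (a M : ℕ) :
    ∑ i ∈ range (M + 1), (a + i).choose a = (a + M + 1).choose (a + 1) := by
  induction M with
  | zero => simp
  | succ M ih =>
      rw [Finset.sum_range_succ, ih]
      have pas : (a + M + 1 + 1).choose (a + 1)
          = (a + M + 1).choose a + (a + M + 1).choose (a + 1) :=
        Nat.choose_succ_succ _ _
      have h1 : a + (M + 1) = a + M + 1 := by ring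
      rw [h1]
      omega

lemma Tsum (b a M : ℕ) :
    ∑ i ∈ range (M + 1), (a + i).choose a * (b + (M - i)).choose b
      = (a + b + M + 1).choose (a + b + 1) := by
  induction b generalizing M with
  | zero => simpa using hockey a M
  | succ b ihb =>
      induction M with
      | zero => simp
      | succ M ihm =>
          have split : ∀ i ∈ range (M + 1),
              (a + i).choose a * (b + 1 + (M + 1 - i)).choose (b + 1)
              = (a + i).choose a * (b + (M + 1 - i)).choose b
                + (a + i).choose a * (b + 1 + (M - i)).choose (b + 1) := by
            intro i hi
            have hi' : i ≤ M := by simpa [Nat.lt_succ_iff] using hi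
            have h1 : b + 1 + (M + 1 - i) = (b + (M + 1 - i)) + 1 := by omega
            have h2 : b + (M + 1 - i) = b + 1 + (M - i) := by omega
            rw [h1, Nat.choose_succ_succ, Nat.mul_add]
            rw [h2]
          have e1 : ∑ i ∈ range (M + 2), (a + i).choose a * (b + 1 + (M + 1 - i)).choose (b + 1)
              = (∑ i ∈ range (M + 2), (a + i).choose a * (b + (M + 1 - i)).choose b)
                + ∑ i ∈ range (M + 1), (a + i).choose a * (b + 1 + (M - i)).choose (b + 1) := by
            rw [Finset.sum_range_succ, Finset.sum_range_succ _ (M + 1),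
              Finset.sum_congr rfl split, Finset.sum_add_distrib]
            simp
            ring
          rw [e1, ihb (M + 1), ihm]
          have pas : (a + b + M + 2 + 1).choose (a + b + 1 + 1)
              = (a + b + M + 2).choose (a + b + 1) + (a + b + M + 2).choose (a + b + 1 + 1) :=
            Nat.choose_succ_succ _ _
          have g1 : a + b + (M + 1) + 1 = a + b + M + 2 := by ring
          have g2 : a + (b + 1) + M + 1 = a + b + M + 2 := by ring
          have g3 : a + (b + 1) + 1 = a + b + 1 + 1 := by ring
          have g4 : a + (b + 1) + (M + 1) + 1 = a + b + M + 2 + 1 := by ring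
          rw [g1, g2, g3, g4]
          omega

lemma num_sum (n k m : ℕ) (hk : k ≤ n) :
    ∑ r ∈ range (m + 1), r * ((k + r).choose k * (n - k + (m - r)).choose (n - k))
      = (k + 1) * (n + m + 1).choose (n + 2) := by
  cases m with
  | zero => simp [Nat.choose_eq_zero_of_lt]
  | succ M =>
      rw [Finset.sum_range_succ']
      have step : ∀ j ∈ range (M + 1),
          (j + 1) * ((k + (j + 1)).choose k * (n - k + (M + 1 - (j + 1))).choose (n - k))
          = (k + 1) * ((k + 1 + j).choose (k + 1) * (n - k + (M - j)).choose (n - k)) := by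
        intro j hj
        have h1 : (j + 1) * (k + (j + 1)).choose k = (k + 1) * (k + 1 + j).choose (k + 1) := by
          have s1 : (k + j).choose j = (k + j).choose k := by
            rw [← Nat.choose_symm (Nat.le_add_right k j)]
            congr 1
            omega
          have s2 : (k + j + 1).choose (j + 1) = (k + j + 1).choose k := by
            rw [← Nat.choose_symm (show k ≤ k + j + 1 by omega)]
            congr 1
            omega
          have e3 : k + (j + 1) = k + j + 1 := by ring
          have e4 : k + 1 + j = k + j + 1 := by ring
          rw [e3, e4, ← s2]
          calc (j + 1) * (k + j + 1).choose (j + 1)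
              = (k + j + 1).choose (j + 1) * (j + 1) := mul_comm _ _
            _ = (k + j).succ * (k + j).choose j := (Nat.add_one_mul_choose_eq (k + j) j).symm
            _ = (k + j).succ * (k + j).choose k := by rw [s1]
            _ = (k + j + 1).choose (k + 1) * (k + 1) := Nat.add_one_mul_choose_eq (k + j) k
            _ = (k + 1) * (k + j + 1).choose (k + 1) := mul_comm _ _
        have h2 : M + 1 - (j + 1) = M - j := by omega
        rw [h2, ← Nat.mul_assoc, ← Nat.mul_assoc, h1]
      rw [Finset.sum_congr rfl step, ← Finset.mul_sum, Tsum]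
      have h3 : k + 1 + (n - k) + M + 1 = n + (M + 1) + 1 := by omega
      have h4 : k + 1 + (n - k) + 1 = n + 2 := by omega
      rw [h3, h4]
      simp

theorem beta_binomial_expectation (n k m : ℕ) (hk : k ≤ n) :
    ∑ r ∈ Finset.range (m + 1),
        (r : ℝ) * (((k + r).choose k * (n - k + (m - r)).choose (n - k) : ℝ) /
          ((n + m + 1).choose (n + 1)))
      = (m : ℝ) * ((k : ℝ) + 1) / ((n : ℝ) + 2) := by
  have hD : ((n + m + 1).choose (n + 1) : ℝ) ≠ 0 := by
    have : 0 < (n + m + 1).choose (n + 1) := Nat.choose_pos (by omega)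
    positivity
  have key := num_sum n k m hk
  have hcross : (n + m + 1).choose (n + 2) * (n + 2) = (n + m + 1).choose (n + 1) * m := by
    have := Nat.choose_succ_right_eq (n + m + 1) (n + 1)
    simpa using this
  have lhs_eq : ∑ r ∈ Finset.range (m + 1),
      (r : ℝ) * (((k + r).choose k * (n - k + (m - r)).choose (n - k) : ℝ) /
        ((n + m + 1).choose (n + 1)))
      = (((k + 1) * (n + m + 1).choose (n + 2) : ℕ) : ℝ) / ((n + m + 1).choose (n + 1) : ℝ) := by
    rw [← key]
    push_cast
    rw [Finset.sum_div]
    apply Finset.sum_congr rfl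
    intro r _
    ring
  rw [lhs_eq]
  push_cast
  rw [div_eq_div_iff hD (by positivity)]
  have hc := congrArg (Nat.cast : ℕ → ℝ) hcross
  push_cast at hc
  nlinarith [hc]
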